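/- arXiv:1405.4170 — 6 statements merged into one kernel-verified Lean document; each statement's English description precedes it below -/
import Mathlib

section
/- Let $c$ be a $d\times d$ real symmetric matrix. Then the matrix equation $2\,\mathrm{tr}(x)\,x + 4x^2 = c^2$ admits exactly one solution $x$ in the set of symmetric nonnegative-definite $d\times d$ matrices. -/
open Matrix Finset

namespace MatrixEqUnique

/-- key scalar inequality -/
lemma sqrt_add_sq_le (μ a b : ℝ) (hμ : 0 ≤ μ) (ha : 0 ≤ a) (hab : a ≤ b) :
    Real.sqrt (μ + b^2) ≤ Real.sqrt (μ + a^2) + (b - a) := by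
  have h1 : a ≤ Real.sqrt (μ + a^2) := by
    nlinarith [Real.sq_sqrt (by positivity : (0:ℝ) ≤ μ + a^2),
      Real.sqrt_nonneg (μ + a^2)]
  have h2 : μ + b^2 ≤ (Real.sqrt (μ + a^2) + (b - a))^2 := by
    nlinarith [Real.sq_sqrt (by positivity : (0:ℝ) ≤ μ + a^2)]
  calc Real.sqrt (μ + b^2) ≤ Real.sqrt ((Real.sqrt (μ + a^2) + (b - a))^2) :=
        Real.sqrt_le_sqrt h2
    _ = Real.sqrt (μ + a^2) + (b - a) :=
        Real.sqrt_sq (by nlinarith [Real.sqrt_nonneg (μ + a^2)])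

noncomputable def hfun (d : ℕ) (ev : Fin d → ℝ) (s : ℝ) : ℝ :=
  (4 + d) * s - ∑ i, Real.sqrt (ev i ^ 2 + s ^ 2)

lemma hfun_strictMonoOn (d : ℕ) (ev : Fin d → ℝ) :
    StrictMonoOn (hfun d ev) (Set.Ici 0) := by
  intro a ha b hb hab
  simp only [Set.mem_Ici] at ha hb
  have key : ∑ i, Real.sqrt (ev i ^ 2 + b ^ 2)
      ≤ (∑ i, Real.sqrt (ev i ^ 2 + a ^ 2)) + d * (b - a) := by
    have : ∀ i ∈ Finset.univ (α := Fin d),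
        Real.sqrt (ev i ^ 2 + b ^ 2) ≤ Real.sqrt (ev i ^ 2 + a ^ 2) + (b - a) :=
      fun i _ => sqrt_add_sq_le _ _ _ (sq_nonneg _) ha hab.le
    calc ∑ i, Real.sqrt (ev i ^ 2 + b ^ 2)
        ≤ ∑ i, (Real.sqrt (ev i ^ 2 + a ^ 2) + (b - a)) := Finset.sum_le_sum this
      _ = (∑ i, Real.sqrt (ev i ^ 2 + a ^ 2)) + d * (b - a) := by
          rw [Finset.sum_add_distrib, Finset.sum_const, Finset.card_univ, Fintype.card_fin,
            nsmul_eq_mul]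
  unfold hfun
  nlinarith [hab]

lemma hfun_exists_zero (d : ℕ) (ev : Fin d → ℝ) :
    ∃ s, 0 ≤ s ∧ hfun d ev s = 0 := by
  set M : ℝ := ∑ i, Real.sqrt (ev i ^ 2) with hM
  have hM0 : 0 ≤ M := Finset.sum_nonneg fun i _ => Real.sqrt_nonneg _
  have hcont : Continuous (hfun d ev) := by
    unfold hfun
    fun_prop
  have h0 : hfun d ev 0 ≤ 0 := by
    unfold hfun
    simp only [mul_zero, zero_sub, neg_nonpos]
    exact Finset.sum_nonneg fun i _ => Real.sqrt_nonneg _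
  have hMle : 0 ≤ hfun d ev M := by
    have key : ∑ i, Real.sqrt (ev i ^ 2 + M ^ 2) ≤ M + d * M := by
      have : ∀ i ∈ Finset.univ (α := Fin d),
          Real.sqrt (ev i ^ 2 + M ^ 2) ≤ Real.sqrt (ev i ^ 2) + M := by
        intro i _
        have := sqrt_add_sq_le (ev i ^ 2) 0 M (sq_nonneg _) le_rfl hM0
        simpa using this
      calc ∑ i, Real.sqrt (ev i ^ 2 + M ^ 2)
          ≤ ∑ i, (Real.sqrt (ev i ^ 2) + M) := Finset.sum_le_sum this
        _ = M + d * M := by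
            rw [Finset.sum_add_distrib, Finset.sum_const, Finset.card_univ, Fintype.card_fin,
              nsmul_eq_mul, ← hM]
    unfold hfun
    nlinarith
  have : (0:ℝ) ∈ Set.Icc (hfun d ev 0) (hfun d ev M) := ⟨h0, hMle⟩
  obtain ⟨s, hs, hs0⟩ := intermediate_value_Icc hM0 hcont.continuousOn this
  exact ⟨s, hs.1, hs0⟩

end MatrixEqUnique

open MatrixEqUnique in
/-- The matrix equation `2 tr(x) x + 4 x² = c²` has exactly one symmetric
nonnegative-definite solution, for any real symmetric `d × d` matrix `c`. -/
theorem matrix_equation_unique_psd_solution (d : ℕ)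
    (c : Matrix (Fin d) (Fin d) ℝ) (hc : c.IsSymm) :
    ∃! x : Matrix (Fin d) (Fin d) ℝ,
      x.PosSemidef ∧ (2 * x.trace) • x + (4 : ℝ) • x ^ 2 = c ^ 2 := by
  classical
  have hch : c.IsHermitian := by
    rw [Matrix.IsHermitian, conjTranspose_eq_transpose_of_trivial]
    exact hc
  set ev : Fin d → ℝ := hch.eigenvalues with hev
  set U : Matrix (Fin d) (Fin d) ℝ := (hch.eigenvectorUnitary : Matrix (Fin d) (Fin d) ℝ)
    with hUdef
  have hUstar : star U * U = 1 := by
    simpa [hUdef] using unitary.coe_star_mul_self hch.eigenvectorUnitary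
  have hUstar' : U * star U = 1 := by
    simpa [hUdef] using unitary.coe_mul_star_self hch.eigenvectorUnitary
  -- conjugation by U
  set D : (Fin d → ℝ) → Matrix (Fin d) (Fin d) ℝ :=
    fun f => U * Matrix.diagonal f * star U with hD
  have hspec : c = D ev := by
    simpa [hD, Function.comp] using hch.spectral_theorem
  have hDmul : ∀ f g, D f * D g = D (fun i => f i * g i) := by
    intro f g
    simp only [hD]
    calc U * Matrix.diagonal f * star U * (U * Matrix.diagonal g * star U)
        = U * Matrix.diagonal f * (star U * U) * Matrix.diagonal g * star U := by
          simp only [Matrix.mul_assoc]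
      _ = U * (Matrix.diagonal f * Matrix.diagonal g) * star U := by
          rw [hUstar]; simp only [Matrix.mul_one, Matrix.mul_assoc]
      _ = U * Matrix.diagonal (fun i => f i * g i) * star U := by
          rw [Matrix.diagonal_mul_diagonal]
  have hDadd : ∀ f g, D f + D g = D (fun i => f i + g i) := by
    intro f g
    simp only [hD, Matrix.diagonal_add, ← Matrix.add_mul, ← Matrix.mul_add]
  have hDsmul : ∀ (r : ℝ) f, r • D f = D (fun i => r * f i) := by
    intro r f
    have hdg : Matrix.diagonal (fun i => r * f i) = r • Matrix.diagonal f := by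
      have := Matrix.diagonal_smul r f
      simpa [Pi.smul_def] using this
    simp only [hD, hdg, Matrix.mul_smul, Matrix.smul_mul]
  have hDone : D (fun _ => 1) = 1 := by
    simp only [hD, Matrix.diagonal_one, Matrix.mul_one, hUstar']
  have hDtrace : ∀ f, (D f).trace = ∑ i, f i := by
    intro f
    simp only [hD]
    rw [Matrix.trace_mul_cycle, hUstar, Matrix.one_mul, Matrix.trace_diagonal]
  have hDpsd : ∀ f, (∀ i, 0 ≤ f i) → (D f).PosSemidef := by
    intro f hf
    have : (Matrix.diagonal f).PosSemidef := Matrix.PosSemidef.diagonal hf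
    simpa [hD, Matrix.star_eq_conjTranspose] using this.mul_mul_conjTranspose_same U
  -- the scalar fixed point
  obtain ⟨s₀, hs₀, hh₀⟩ := hfun_exists_zero d ev
  have hsum₀ : ∑ i, Real.sqrt (ev i ^ 2 + s₀ ^ 2) = (4 + d) * s₀ := by
    unfold hfun at hh₀; linarith
  -- candidate solution
  set w : Fin d → ℝ := fun i => (Real.sqrt (ev i ^ 2 + s₀ ^ 2) - s₀) / 2 with hw
  have hwnn : ∀ i, 0 ≤ w i := by
    intro i
    have h := Real.sqrt_le_sqrt (show s₀ ^ 2 ≤ ev i ^ 2 + s₀ ^ 2 by nlinarith [sq_nonneg (ev i)])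
    rw [Real.sqrt_sq hs₀] at h
    simp only [hw]
    linarith
  set x₀ : Matrix (Fin d) (Fin d) ℝ := D w with hx₀
  have hx₀psd : x₀.PosSemidef := hDpsd w hwnn
  have hx₀tr : x₀.trace = 2 * s₀ := by
    rw [hx₀, hDtrace]
    have : ∑ i, w i = (∑ i, Real.sqrt (ev i ^ 2 + s₀ ^ 2)) / 2 - d * (s₀ / 2) := by
      simp only [hw, sub_div, Finset.sum_sub_distrib, ← Finset.sum_div, Finset.sum_const,
        Finset.card_univ, Fintype.card_fin, nsmul_eq_mul]
      ring
    rw [this, hsum₀]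
    ring
  have hsm1 : ∀ r : ℝ, r • (1 : Matrix (Fin d) (Fin d) ℝ) = D (fun _ => r) := by
    intro r
    rw [← hDone, hDsmul]
    simp
  have hx₀eq : (2 * x₀.trace) • x₀ + (4 : ℝ) • x₀ ^ 2 = c ^ 2 := by
    have e1 : x₀ ^ 2 = D (fun i => w i * w i) := by rw [pow_two, hx₀, hDmul]
    have e2 : c ^ 2 = D (fun i => ev i * ev i) := by rw [pow_two, hspec, hDmul]
    rw [hx₀tr, e1, hx₀, hDsmul, hDsmul, hDadd, e2]
    refine congrArg D ?_
    funext i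
    have hq2 : Real.sqrt (ev i ^ 2 + s₀ ^ 2) ^ 2 = ev i ^ 2 + s₀ ^ 2 :=
      Real.sq_sqrt (by positivity)
    simp only [hw]
    linear_combination hq2
  refine ⟨x₀, ⟨hx₀psd, hx₀eq⟩, ?_⟩
  -- uniqueness
  rintro x ⟨hxpsd, hxeq⟩
  have hdiag : ∀ i, 0 ≤ x i i := by
    intro i
    simpa using hxpsd.dotProduct_mulVec_nonneg (Pi.single i 1)
  have htrnn : 0 ≤ x.trace := by
    rw [Matrix.trace]
    exact Finset.sum_nonneg fun i _ => hdiag i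
  set s : ℝ := x.trace / 2 with hs
  have hsnn : 0 ≤ s := by positivity
  set y : Matrix (Fin d) (Fin d) ℝ := (2:ℝ) • x + s • (1 : Matrix (Fin d) (Fin d) ℝ) with hy
  have hxt : xᵀ = x := by
    have h := hxpsd.1
    rwa [Matrix.IsHermitian, Matrix.conjTranspose_eq_transpose_of_trivial] at h
  have hypsd : y.PosSemidef := by
    refine Matrix.PosSemidef.of_dotProduct_mulVec_nonneg ?_ ?_
    · rw [hy, Matrix.IsHermitian]
      simp [Matrix.conjTranspose_add, Matrix.conjTranspose_smul,
        Matrix.conjTranspose_eq_transpose_of_trivial, hxt]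
    · intro v
      rw [hy]
      simp only [Matrix.add_mulVec, Matrix.smul_mulVec, Matrix.one_mulVec,
        dotProduct_add, dotProduct_smul, smul_eq_mul]
      have h1 := hxpsd.dotProduct_mulVec_nonneg v
      have h2 : 0 ≤ dotProduct (star v) v := by
        simpa using dotProduct_star_self_nonneg v
      nlinarith
  have hysq : y ^ 2 = c ^ 2 + (s ^ 2) • (1 : Matrix (Fin d) (Fin d) ℝ) := by
    have hxx : (2 * x.trace) = 4 * s := by rw [hs]; ring
    rw [hy, pow_two]
    rw [← hxeq, hxx]
    simp only [Matrix.add_mul, Matrix.mul_add, Matrix.smul_mul, Matrix.mul_smul,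
      Matrix.one_mul, Matrix.mul_one, smul_smul, pow_two]
    abel_nf
    module
  -- S s is also a PSD sqrt of the same matrix
  set q : Fin d → ℝ := fun i => Real.sqrt (ev i ^ 2 + s ^ 2) with hq
  have hqpsd : (D q).PosSemidef := hDpsd q fun i => Real.sqrt_nonneg _
  have hqsq : (D q) ^ 2 = c ^ 2 + (s ^ 2) • (1 : Matrix (Fin d) (Fin d) ℝ) := by
    have e2 : c ^ 2 = D (fun i => ev i * ev i) := by rw [pow_two, hspec, hDmul]
    rw [pow_two, hDmul, e2, hsm1, hDadd]
    refine congrArg D ?_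
    funext i
    have hq2 : Real.sqrt (ev i ^ 2 + s ^ 2) ^ 2 = ev i ^ 2 + s ^ 2 :=
      Real.sq_sqrt (by positivity)
    simp only [hq]
    linear_combination hq2
  have hyD : y = D q := by
    open scoped MatrixOrder in
    exact (CFC.sq_eq_sq_iff y (D q) hypsd.nonneg hqpsd.nonneg).mp (by rw [hysq, hqsq])
  -- trace identity forces s = s₀
  have htry : y.trace = (4 + d) * s := by
    rw [hy, Matrix.trace_add, Matrix.trace_smul, Matrix.trace_smul, Matrix.trace_one]
    have hx2s : x.trace = 2 * s := by rw [hs]; ring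
    simp only [smul_eq_mul, hx2s, Fintype.card_fin]
    ring
  have htrD : (D q).trace = ∑ i, Real.sqrt (ev i ^ 2 + s ^ 2) := hDtrace q
  have hhs : hfun d ev s = 0 := by
    unfold hfun
    rw [← htrD, ← hyD, htry]
    ring
  have hss : s = s₀ :=
    (hfun_strictMonoOn d ev).injOn hsnn hs₀ (by rw [hhs, hh₀])
  -- conclude x = x₀
  have hDq : D q = (2:ℝ) • x₀ + s₀ • (1 : Matrix (Fin d) (Fin d) ℝ) := by
    rw [hx₀, hDsmul, hsm1, hDadd]
    refine (congrArg D ?_).symm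
    funext i
    simp only [hq, hw, hss]
    ring
  have hkey : (2:ℝ) • x + s₀ • (1 : Matrix (Fin d) (Fin d) ℝ)
      = (2:ℝ) • x₀ + s₀ • (1 : Matrix (Fin d) (Fin d) ℝ) := by
    rw [← hDq, ← hyD, hy, hss]
  have h2x : (2:ℝ) • x = (2:ℝ) • x₀ := add_right_cancel hkey
  exact smul_right_injective (Matrix (Fin d) (Fin d) ℝ) (two_ne_zero (α := ℝ)) h2x
end

section
/- Let $c$ be a $d\times d$ real symmetric matrix and let $x(c)$ be the unique symmetric nonnegative-definite solution of $2\,\mathrm{tr}(x)x + 4x^2 = c^2$. Then $x(c)$ is positive-definite if and only if $c^2$ is positive-definite. -/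
open scoped Matrix


/-- If `x` is the (unique) symmetric nonnegative-definite solution of
`2 tr(x) x + 4 x² = c²` for a symmetric `c`, then `x` is positive-definite
iff `c²` is positive-definite. -/
theorem matrix_equation_posdef_iff (d : ℕ)
    (c x : Matrix (Fin d) (Fin d) ℝ) (hc : c.IsSymm)
    (hx : x.PosSemidef) (heq : (2 * x.trace) • x + (4 : ℝ) • x ^ 2 = c ^ 2) :
    x.PosDef ↔ (c ^ 2).PosDef := by
  have key : ∀ ξ : Fin d → ℝ, star ξ ⬝ᵥ (c ^ 2) *ᵥ ξ =
      (2 * x.trace) * (star ξ ⬝ᵥ x *ᵥ ξ) + 4 * (star ξ ⬝ᵥ (x ^ 2) *ᵥ ξ) := by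
    intro ξ
    rw [← heq]
    simp [Matrix.add_mulVec, Matrix.smul_mulVec, dotProduct_add, dotProduct_smul,
      smul_eq_mul]
  have htr : (0 : ℝ) ≤ x.trace := by
    rw [Matrix.trace]
    apply Finset.sum_nonneg
    intro i _
    have := hx.dotProduct_mulVec_nonneg (Pi.single i 1)
    simpa [Matrix.mulVec_single, dotProduct, Pi.single_apply] using this
  constructor
  · intro hxd
    refine Matrix.PosDef.of_dotProduct_mulVec_pos ?_ (fun ξ hξ => ?_)
    · have hch : c.IsHermitian := by
        rw [Matrix.IsHermitian, Matrix.conjTranspose_eq_transpose_of_trivial]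
        exact hc
      exact hch.pow 2
    · rw [key ξ]
      have h1 : 0 ≤ (2 * x.trace) * (star ξ ⬝ᵥ x *ᵥ ξ) :=
        mul_nonneg (by linarith) (hx.dotProduct_mulVec_nonneg ξ)
      have hxinv : IsUnit x.det := isUnit_iff_ne_zero.mpr (ne_of_gt hxd.det_pos)
      have hinj : Function.Injective x.mulVec :=
        Matrix.mulVec_injective_iff_isUnit.mpr ((Matrix.isUnit_iff_isUnit_det x).mpr hxinv)
      have hker : ∀ v, x *ᵥ v = 0 → v = 0 := fun v hv => hinj (by simpa using hv)
      have hx2 : (x ^ 2) *ᵥ ξ ≠ 0 := by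
        rw [pow_two, ← Matrix.mulVec_mulVec]
        intro h
        exact hξ (hker _ (hker _ h))
      have h2 : 0 < star ξ ⬝ᵥ (x ^ 2) *ᵥ ξ := by
        rcases lt_or_eq_of_le ((hx.pow 2).dotProduct_mulVec_nonneg ξ) with h | h
        · exact h
        · exact absurd (((hx.pow 2).dotProduct_mulVec_zero_iff ξ).mp h.symm) hx2
      linarith
  · intro hcd
    refine Matrix.PosDef.of_dotProduct_mulVec_pos hx.1 (fun ξ hξ => ?_)
    rcases lt_or_eq_of_le (hx.dotProduct_mulVec_nonneg ξ) with h | h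
    · exact h
    · exfalso
      have hxv : x *ᵥ ξ = 0 := (hx.dotProduct_mulVec_zero_iff ξ).mp h.symm
      have h2 : (x ^ 2) *ᵥ ξ = 0 := by
        rw [pow_two, ← Matrix.mulVec_mulVec, hxv, Matrix.mulVec_zero]
      have := hcd.dotProduct_mulVec_pos hξ
      rw [key ξ, ← h, h2, dotProduct_zero] at this
      simp at this
end

section
/- The map $c \mapsto x(c)$, assigning to each real symmetric $d\times d$ matrix $c$ the unique symmetric nonnegative-definite solution of $2\,\mathrm{tr}(x)x + 4x^2 = c^2$, is continuous on the space of symmetric matrices. -/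
open Matrix Filter Topology Set

section Aux
variable {d : ℕ}

lemma psd_quad {x : Matrix (Fin d) (Fin d) ℝ} (hx : x.PosSemidef) (v : Fin d → ℝ) :
    0 ≤ ∑ i, ∑ j, v i * x i j * v j := by
  have h := hx.dotProduct_mulVec_nonneg v
  simpa [dotProduct, Matrix.mulVec, Finset.mul_sum, mul_assoc] using h

lemma psd_symm_apply {x : Matrix (Fin d) (Fin d) ℝ} (hx : x.PosSemidef) (i j : Fin d) :
    x j i = x i j := by
  have := hx.1
  have h := congrFun (congrFun this.eq j) i
  simpa using h.symm

lemma psd_diag_nonneg {x : Matrix (Fin d) (Fin d) ℝ} (hx : x.PosSemidef) (i : Fin d) :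
    0 ≤ x i i := by
  have h := psd_quad hx (Pi.single i 1)
  simpa [Pi.single_apply, Finset.sum_ite_eq, Finset.sum_ite_eq'] using h

lemma psd_diag_le_trace {x : Matrix (Fin d) (Fin d) ℝ} (hx : x.PosSemidef) (i : Fin d) :
    x i i ≤ x.trace := by
  unfold Matrix.trace
  exact Finset.single_le_sum (fun j _ => psd_diag_nonneg hx j) (Finset.mem_univ i)

lemma psd_entry_bound {x : Matrix (Fin d) (Fin d) ℝ} (hx : x.PosSemidef) (i j : Fin d) :
    |x i j| ≤ x.trace := by
  rcases eq_or_ne i j with rfl | hij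
  · rw [abs_of_nonneg (psd_diag_nonneg hx i)]; exact psd_diag_le_trace hx i
  · have h1 := psd_quad hx (Pi.single i 1 + Pi.single j 1)
    have h2 := psd_quad hx (Pi.single i 1 - Pi.single j 1)
    have e1 : ∀ (w : Fin d → ℝ), (∑ a, ∑ b, w a * x a b * w b) =
        ∑ a, w a * ∑ b, x a b * w b := by
      intro w; refine Finset.sum_congr rfl fun a _ => ?_
      rw [Finset.mul_sum]; refine Finset.sum_congr rfl fun b _ => by ring
    rw [e1] at h1 h2
    simp only [Pi.add_apply, Pi.sub_apply, Pi.single_apply] at h1 h2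
    have hji := psd_symm_apply hx i j
    simp only [mul_add, mul_sub, add_mul, sub_mul, mul_ite, ite_mul, mul_one, one_mul,
      mul_zero, zero_mul, Finset.sum_add_distrib, Finset.sum_sub_distrib,
      Finset.sum_ite_eq', Finset.mem_univ, if_true] at h1 h2
    rw [hji] at h1 h2
    have hii := psd_diag_le_trace hx i
    have hjj := psd_diag_le_trace hx j
    have h0i := psd_diag_nonneg hx i
    have h0j := psd_diag_nonneg hx j
    rw [abs_le]
    constructor <;> nlinarith [Matrix.trace x]


lemma trace_sq_symm (y : Matrix (Fin d) (Fin d) ℝ) (hy : ∀ i j, y j i = y i j) :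
    (y ^ 2).trace = ∑ i, ∑ j, (y i j) ^ 2 := by
  rw [pow_two, Matrix.trace]
  refine Finset.sum_congr rfl fun i _ => ?_
  rw [Matrix.diag_apply, Matrix.mul_apply]
  refine Finset.sum_congr rfl fun j _ => ?_
  rw [hy i j]; ring

lemma trace_sq_nonneg (y : Matrix (Fin d) (Fin d) ℝ) (hy : ∀ i j, y j i = y i j) :
    0 ≤ (y ^ 2).trace := by
  rw [trace_sq_symm y hy]
  exact Finset.sum_nonneg fun i _ => Finset.sum_nonneg fun j _ => sq_nonneg _

lemma trace_bound {x c : Matrix (Fin d) (Fin d) ℝ} (hx : x.PosSemidef)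
    (heq : (2 * x.trace) • x + (4 : ℝ) • x ^ 2 = c ^ 2) :
    x.trace ≤ Real.sqrt ((c ^ 2).trace) := by
  have htr := congrArg Matrix.trace heq
  rw [Matrix.trace_add, Matrix.trace_smul, Matrix.trace_smul, smul_eq_mul, smul_eq_mul] at htr
  have hx2 : 0 ≤ (x ^ 2).trace := trace_sq_nonneg x (psd_symm_apply hx)
  have ht0 : 0 ≤ x.trace := Finset.sum_nonneg fun i _ => psd_diag_nonneg hx i
  have hc2 : 0 ≤ (c ^ 2).trace := by nlinarith
  nlinarith [Real.sqrt_nonneg ((c ^ 2).trace), Real.sq_sqrt hc2]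

end Aux



/-- The map `c ↦ x(c)` assigning to each symmetric matrix `c` the unique
symmetric nonnegative-definite solution of `2 tr(x) x + 4 x² = c²` is
continuous on the set of symmetric matrices. -/
theorem matrix_equation_solution_continuous (d : ℕ)
    (xfun : Matrix (Fin d) (Fin d) ℝ → Matrix (Fin d) (Fin d) ℝ)
    (hsol : ∀ c : Matrix (Fin d) (Fin d) ℝ, c.IsSymm →
      (xfun c).PosSemidef ∧
        (2 * (xfun c).trace) • xfun c + (4 : ℝ) • (xfun c) ^ 2 = c ^ 2)
    (huniq : ∀ c : Matrix (Fin d) (Fin d) ℝ, c.IsSymm →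
      ∀ x : Matrix (Fin d) (Fin d) ℝ, x.PosSemidef →
        (2 * x.trace) • x + (4 : ℝ) • x ^ 2 = c ^ 2 → x = xfun c) :
    ContinuousOn xfun {c : Matrix (Fin d) (Fin d) ℝ | c.IsSymm} := by

  set S : Set (Matrix (Fin d) (Fin d) ℝ) := {c | c.IsSymm} with hSdef
  intro c₀ hc₀
  set M : ℝ := Real.sqrt (((c₀ : Matrix (Fin d) (Fin d) ℝ) ^ 2).trace) + 1 with hMdef
  set K : Set (Matrix (Fin d) (Fin d) ℝ) := {y | ∀ i j, y i j ∈ Icc (-M) M} with hKdef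
  -- compactness of K
  have hK : IsCompact K := by
    have h1 : IsCompact (Set.pi Set.univ fun _ : Fin d =>
        Set.pi Set.univ fun _ : Fin d => Icc (-M) M : Set (Fin d → Fin d → ℝ)) :=
      isCompact_univ_pi fun _ => isCompact_univ_pi fun _ => isCompact_Icc
    have h2 : K = (Set.pi Set.univ fun _ : Fin d =>
        Set.pi Set.univ fun _ : Fin d => Icc (-M) M : Set (Fin d → Fin d → ℝ)) := by
      ext y
      simp only [hKdef, Set.mem_setOf_eq]
      exact ⟨fun h => Set.mem_univ_pi.mpr fun i => Set.mem_univ_pi.mpr fun j => h i j,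
        fun h i j => Set.mem_univ_pi.mp (Set.mem_univ_pi.mp h i) j⟩
    rw [h2]; exact h1
  -- continuity of the bound function
  have hcont : Continuous fun c : Matrix (Fin d) (Fin d) ℝ => Real.sqrt ((c ^ 2).trace) :=
    Real.continuous_sqrt.comp (continuous_pow 2).matrix_trace
  -- eventual membership in K
  have hev : ∀ᶠ c in 𝓝[S] c₀, Real.sqrt ((c ^ 2).trace) < M := by
    refine eventually_nhdsWithin_of_eventually_nhds ?_
    have := (hcont.tendsto c₀)
    exact this.eventually_lt_const (by simp [hMdef])
  have hmem : ∀ᶠ c in 𝓝[S] c₀, xfun c ∈ K := by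
    filter_upwards [hev, self_mem_nhdsWithin] with c hlt (hc : c.IsSymm)
    obtain ⟨hpsd, heq⟩ := hsol c hc
    intro i j
    have hb : |xfun c i j| ≤ M :=
      (psd_entry_bound hpsd i j).trans ((trace_bound hpsd heq).trans hlt.le)
    exact abs_le.mp hb
  -- unique cluster point
  refine hK.tendsto_nhds_of_unique_mapClusterPt hmem ?_
  intro x hxK hx
  have hG : (𝓝[S] c₀ ⊓ Filter.comap xfun (𝓝 x)).NeBot := by
    have h := hx
    rw [MapClusterPt, ClusterPt, inf_comm, ← Filter.push_pull] at h
    exact Filter.map_neBot_iff xfun |>.mp h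
  set G := 𝓝[S] c₀ ⊓ Filter.comap xfun (𝓝 x) with hGdef
  have hGc : Tendsto (fun c => c) G (𝓝 c₀) :=
    tendsto_id.mono_left (le_trans inf_le_left nhdsWithin_le_nhds)
  have hGx : Tendsto xfun G (𝓝 x) := tendsto_iff_comap.mpr inf_le_right
  have hGS : ∀ᶠ c in G, c ∈ S :=
    Filter.mem_of_superset (Filter.mem_inf_of_left self_mem_nhdsWithin) fun _ h => h
  -- entrywise tendsto
  have hent : ∀ i j, Tendsto (fun c => xfun c i j) G (𝓝 (x i j)) := fun i j =>
    ((continuous_id.matrix_elem i j).tendsto x).comp hGx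
  -- x is symmetric (hence Hermitian)
  have hsym : ∀ i j, x j i = x i j := by
    intro i j
    refine tendsto_nhds_unique_of_eventuallyEq (hent j i) (hent i j) ?_
    filter_upwards [hGS] with c hc
    exact psd_symm_apply (hsol c hc).1 i j
  have hherm : x.IsHermitian := by
    ext i j
    rw [Matrix.conjTranspose_apply, star_trivial]
    exact hsym i j
  -- quadratic form nonneg
  have hquad : ∀ v : Fin d → ℝ, 0 ≤ ∑ i, ∑ j, v i * x i j * v j := by
    intro v
    have hc : Continuous fun y : Matrix (Fin d) (Fin d) ℝ => ∑ i, ∑ j, v i * y i j * v j :=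
      continuous_finset_sum _ fun i _ => continuous_finset_sum _ fun j _ =>
        ((continuous_const.mul (continuous_id.matrix_elem i j)).mul continuous_const)
    refine ge_of_tendsto ((hc.tendsto x).comp hGx) ?_
    filter_upwards [hGS] with c hc'
    exact psd_quad (hsol c hc').1 v
  have hpsd : x.PosSemidef := by
    refine Matrix.PosSemidef.of_dotProduct_mulVec_nonneg hherm fun v => ?_
    simpa [dotProduct, Matrix.mulVec, Finset.mul_sum, mul_assoc] using hquad v
  -- x satisfies the equation for c₀
  have heqc : (2 * x.trace) • x + (4 : ℝ) • x ^ 2 = c₀ ^ 2 := by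
    have hFcont : Continuous fun y : Matrix (Fin d) (Fin d) ℝ =>
        (2 * y.trace) • y + (4 : ℝ) • y ^ 2 :=
      ((continuous_const.mul continuous_id.matrix_trace).smul continuous_id).add
        (Continuous.smul (f := fun _ => (4 : ℝ)) (g := fun y : Matrix (Fin d) (Fin d) ℝ => y ^ 2)
          continuous_const (continuous_pow 2))
    have h1 : Tendsto (fun c => (2 * (xfun c).trace) • xfun c + (4 : ℝ) • (xfun c) ^ 2) G
        (𝓝 ((2 * x.trace) • x + (4 : ℝ) • x ^ 2)) := (hFcont.tendsto x).comp hGx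
    have h2 : Tendsto (fun c : Matrix (Fin d) (Fin d) ℝ => c ^ 2) G (𝓝 (c₀ ^ 2)) :=
      ((continuous_pow 2).tendsto c₀).comp hGc
    refine tendsto_nhds_unique_of_eventuallyEq h1 h2 ?_
    filter_upwards [hGS] with c hc
    exact (hsol c hc).2
  exact huniq c₀ hc₀ x hpsd heqc
end

section
/- For every $\lambda \in \mathbb{R}^d$, the unique nonnegative root $y_\lambda$ of $y \mapsto (4+d)y - \sum_{i=1}^d \sqrt{y^2 + 4\lambda_i^2}$ satisfies $0 \le y_\lambda \le \frac{d\,|\lambda|}{\sqrt{4+2d}}$, where $|\lambda|$ is the Euclidean norm of $\lambda$. -/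
/-- The unique nonnegative root `y_λ` of `y ↦ (4+d) y - ∑ i, √(y² + 4 λᵢ²)`
satisfies `0 ≤ y_λ ≤ d |λ| / √(4 + 2d)`. -/
theorem nonneg_root_bound (d : ℕ) (lam : Fin d → ℝ) (y : ℝ)
    (hy : 0 ≤ y)
    (hroot : (4 + (d : ℝ)) * y - ∑ i : Fin d, Real.sqrt (y ^ 2 + 4 * lam i ^ 2) = 0) :
    0 ≤ y ∧ y ≤ (d : ℝ) * Real.sqrt (∑ i : Fin d, lam i ^ 2) / Real.sqrt (4 + 2 * (d : ℝ)) := by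
  refine ⟨hy, ?_⟩
  set S := ∑ i : Fin d, lam i ^ 2 with hS
  have hS0 : 0 ≤ S := Finset.sum_nonneg fun i _ => sq_nonneg _
  have hsum : (4 + (d : ℝ)) * y = ∑ i : Fin d, Real.sqrt (y ^ 2 + 4 * lam i ^ 2) := by
    linarith
  have hCS : ((4 + (d : ℝ)) * y) ^ 2 ≤ (d : ℝ) * ((d : ℝ) * y ^ 2 + 4 * S) := by
    rw [hsum]
    calc (∑ i : Fin d, Real.sqrt (y ^ 2 + 4 * lam i ^ 2)) ^ 2
        ≤ (Finset.univ.card : ℝ) * ∑ i : Fin d, (Real.sqrt (y ^ 2 + 4 * lam i ^ 2)) ^ 2 :=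
          sq_sum_le_card_mul_sum_sq
      _ = (d : ℝ) * ((d : ℝ) * y ^ 2 + 4 * S) := by
          have : ∀ i : Fin d, (Real.sqrt (y ^ 2 + 4 * lam i ^ 2)) ^ 2 = y ^ 2 + 4 * lam i ^ 2 :=
            fun i => Real.sq_sqrt (by positivity)
          simp only [this, Finset.sum_add_distrib, Finset.sum_const, Finset.card_univ,
            Fintype.card_fin, nsmul_eq_mul, ← Finset.mul_sum, hS]
  have hy2 : y ^ 2 ≤ (d : ℝ) ^ 2 * S / (4 + 2 * (d : ℝ)) := by
    rcases Nat.eq_zero_or_pos d with hd | hd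
    · subst hd
      simp only [Nat.cast_zero] at hroot ⊢
      have : y = 0 := by simpa using hroot
      simp [this]
    · have hd1 : (1 : ℝ) ≤ (d : ℝ) := by exact_mod_cast hd
      rw [le_div_iff₀ (by positivity)]
      nlinarith [sq_nonneg y, mul_nonneg hS0 (sub_nonneg.2 hd1)]
  have h1 : y = Real.sqrt (y ^ 2) := (Real.sqrt_sq hy).symm
  rw [h1]
  calc Real.sqrt (y ^ 2) ≤ Real.sqrt ((d : ℝ) ^ 2 * S / (4 + 2 * (d : ℝ))) :=
        Real.sqrt_le_sqrt hy2
    _ = (d : ℝ) * Real.sqrt S / Real.sqrt (4 + 2 * (d : ℝ)) := by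
        rw [Real.sqrt_div (by positivity), Real.sqrt_mul (by positivity),
          Real.sqrt_sq (by positivity)]
end

section
/- Let $c$ be a real symmetric $d \times d$ matrix with eigenvalues $\lambda_1(c),\dots,\lambda_d(c)$, let $y_{\lambda(c)}$ be the unique nonnegative root of $y \mapsto (4+d)y - \sum_{i=1}^d \sqrt{y^2 + 4\lambda_i(c)^2}$, and define $x(c) = -\frac{y_{\lambda(c)}}{4} I_d + \frac{1}{2}\left(\frac{y_{\lambda(c)}^2}{4} I_d + c^2\right)^{1/2}$, where $(\cdot)^{1/2}$ denotes the unique symmetric nonnegative-definite square root. Then $x(c)$ is symmetric nonnegative-definite and satisfies $2\,\mathrm{tr}(x(c))\,x(c) + 4x(c)^2 = c^2$. -/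
section
open scoped ComplexOrder

noncomputable def Matrix.PosSemidef.sqrt {n 𝕜 : Type*} [Fintype n] [RCLike 𝕜] [DecidableEq n]
    {A : Matrix n n 𝕜} (hA : A.PosSemidef) : Matrix n n 𝕜 :=
  hA.1.eigenvectorUnitary.1 * Matrix.diagonal ((↑) ∘ (√·) ∘ hA.1.eigenvalues) *
  (star hA.1.eigenvectorUnitary : Matrix n n 𝕜)

end

section
open scoped MatrixOrder

theorem Matrix.PosSemidef.sqrt_eq_cfcSqrt_aux {d : ℕ} {A : Matrix (Fin d) (Fin d) ℝ}
    (hA : A.PosSemidef) : hA.sqrt = CFC.sqrt A := by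
  have h0 : (0 : Matrix (Fin d) (Fin d) ℝ) ≤ A := hA.nonneg
  rw [CFC.sqrt_eq_real_sqrt A h0, cfcₙ_eq_cfc (f := Real.sqrt), hA.1.cfc_eq]
  simp [Matrix.IsHermitian.cfc, Matrix.PosSemidef.sqrt, Unitary.conjStarAlgAut_apply]

theorem Matrix.PosSemidef.sqrt_mul_self_aux {d : ℕ} {A : Matrix (Fin d) (Fin d) ℝ}
    (hA : A.PosSemidef) : hA.sqrt * hA.sqrt = A := by
  rw [hA.sqrt_eq_cfcSqrt_aux]
  exact CFC.sqrt_mul_sqrt_self A hA.nonneg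

theorem Matrix.PosSemidef.eq_sqrt_of_sq_eq_aux {d : ℕ} {A B : Matrix (Fin d) (Fin d) ℝ}
    (hB : B.PosSemidef) (hA : A.PosSemidef) (h : B ^ 2 = A) : B = hA.sqrt := by
  rw [hA.sqrt_eq_cfcSqrt_aux]
  exact (CFC.sqrt_unique (by rw [← h, pow_two]) hB.nonneg).symm

end

/-- Explicit solution of `2 tr(x) x + 4 x² = c²`: with `y` the unique
nonnegative root of `y ↦ (4+d) y - ∑ i √(y² + 4 λᵢ(c)²)` (`λᵢ(c)` the
eigenvalues of `c`), the matrix `x(c) = -(y/4) I + (1/2)(y²/4 I + c²)^{1/2}`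
is symmetric nonnegative-definite and solves the equation. -/
theorem explicit_solution_solves_matrix_equation (d : ℕ)
    (c : Matrix (Fin d) (Fin d) ℝ) (hc : c.IsHermitian) (y : ℝ) (hy : 0 ≤ y)
    (hroot : (4 + (d : ℝ)) * y
      - ∑ i : Fin d, Real.sqrt (y ^ 2 + 4 * hc.eigenvalues i ^ 2) = 0)
    (hA : (Matrix.PosSemidef ((y ^ 2 / 4) • (1 : Matrix (Fin d) (Fin d) ℝ) + c ^ 2))) :
    (Matrix.PosSemidef (-(y / 4) • (1 : Matrix (Fin d) (Fin d) ℝ) + (2⁻¹ : ℝ) • hA.sqrt)) ∧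
      (2 * (-(y / 4) • (1 : Matrix (Fin d) (Fin d) ℝ) + (2⁻¹ : ℝ) • hA.sqrt).trace) •
          (-(y / 4) • (1 : Matrix (Fin d) (Fin d) ℝ) + (2⁻¹ : ℝ) • hA.sqrt)
        + (4 : ℝ) • (-(y / 4) • (1 : Matrix (Fin d) (Fin d) ℝ) + (2⁻¹ : ℝ) • hA.sqrt) ^ 2
      = c ^ 2 := by
  set U : Matrix (Fin d) (Fin d) ℝ := (hc.eigenvectorUnitary : Matrix (Fin d) (Fin d) ℝ) with hU
  set g : Fin d → ℝ := fun i => Real.sqrt (y ^ 2 / 4 + hc.eigenvalues i ^ 2) with hg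
  have hUU : U * star U = 1 := Matrix.mem_unitaryGroup_iff.mp hc.eigenvectorUnitary.2
  have hUU' : star U * U = 1 := Matrix.mem_unitaryGroup_iff'.mp hc.eigenvectorUnitary.2
  have key : ∀ f h : Fin d → ℝ, (U * Matrix.diagonal f * star U) * (U * Matrix.diagonal h * star U)
      = U * Matrix.diagonal (fun i => f i * h i) * star U := by
    intro f h
    simp only [Matrix.mul_assoc]
    rw [← Matrix.mul_assoc (star U) U, hUU', Matrix.one_mul,
      ← Matrix.mul_assoc (Matrix.diagonal f), Matrix.diagonal_mul_diagonal]
  have hspec : c = U * Matrix.diagonal hc.eigenvalues * star U := by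
    simpa using hc.spectral_theorem
  have hone : ∀ r : ℝ, r • (1 : Matrix (Fin d) (Fin d) ℝ)
      = U * Matrix.diagonal (fun _ => r) * star U := by
    intro r
    rw [← Matrix.smul_one_eq_diagonal, Matrix.mul_smul, Matrix.smul_mul, Matrix.mul_one, hUU]
  set B : Matrix (Fin d) (Fin d) ℝ := U * Matrix.diagonal g * star U with hB
  have hBpos : B.PosSemidef :=
    Matrix.PosSemidef.mul_mul_conjTranspose_same
      (Matrix.posSemidef_diagonal_iff.mpr fun i => Real.sqrt_nonneg _) U
  have hB2 : B ^ 2 = (y ^ 2 / 4) • (1 : Matrix (Fin d) (Fin d) ℝ) + c ^ 2 := by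
    rw [pow_two B, pow_two c, hB, hspec, key, key, hone]
    rw [← Matrix.add_mul, ← Matrix.mul_add]
    have hgg : (fun i => g i * g i)
        = ((fun _ => y ^ 2 / 4) + fun i => hc.eigenvalues i * hc.eigenvalues i) := by
      funext i
      have h0 : (0:ℝ) ≤ y ^ 2 / 4 + hc.eigenvalues i ^ 2 := by positivity
      show g i * g i = y ^ 2 / 4 + hc.eigenvalues i * hc.eigenvalues i
      rw [hg, Real.mul_self_sqrt h0]; ring
    rw [hgg, Matrix.diagonal_add]; rfl
  have hBsqrt : hA.sqrt = B := (hBpos.eq_sqrt_of_sq_eq_aux hA hB2).symm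
  have hsum : ∑ i : Fin d, g i = (4 + (d : ℝ)) * y / 2 := by
    have h2 : ∀ i, Real.sqrt (y ^ 2 + 4 * hc.eigenvalues i ^ 2) = 2 * g i := by
      intro i
      rw [hg]
      rw [← Real.sqrt_mul_self (by norm_num : (0:ℝ) ≤ 2), ← Real.sqrt_mul (by positivity)]
      congr 1; ring
    have := hroot
    rw [Finset.sum_congr rfl fun i _ => h2 i, ← Finset.mul_sum] at this
    linarith
  have htrB : B.trace = (4 + (d : ℝ)) * y / 2 := by
    rw [hB, Matrix.trace_mul_cycle, hUU', Matrix.one_mul, Matrix.trace_diagonal, hsum]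
  have htr : (-(y / 4) • (1 : Matrix (Fin d) (Fin d) ℝ) + (2⁻¹ : ℝ) • hA.sqrt).trace = y := by
    rw [Matrix.trace_add, Matrix.trace_smul, Matrix.trace_smul, Matrix.trace_one, hBsqrt, htrB]
    simp only [smul_eq_mul, Fintype.card_fin]
    field_simp
    ring
  constructor
  · -- positivity
    have hx : -(y / 4) • (1 : Matrix (Fin d) (Fin d) ℝ) + (2⁻¹ : ℝ) • hA.sqrt
        = U * Matrix.diagonal (fun i => -(y / 4) + 2⁻¹ * g i) * star U := by
      have h2 : (2⁻¹ : ℝ) • (U * Matrix.diagonal g * star U)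
          = U * Matrix.diagonal (fun i => 2⁻¹ * g i) * star U := by
        rw [show (fun i => (2⁻¹:ℝ) * g i) = (2⁻¹ : ℝ) • g from rfl,
          Matrix.diagonal_smul, Matrix.mul_smul, Matrix.smul_mul]
      rw [hBsqrt, hB, hone (-(y/4)), h2, ← Matrix.add_mul, ← Matrix.mul_add,
        Matrix.diagonal_add]
    rw [hx]
    refine Matrix.PosSemidef.mul_mul_conjTranspose_same
      (Matrix.posSemidef_diagonal_iff.mpr fun i => ?_) U
    have hge : y / 2 ≤ g i := by
      rw [hg]
      calc y / 2 = Real.sqrt (y ^ 2 / 4) := by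
            rw [show y ^ 2 / 4 = (y / 2) ^ 2 by ring, Real.sqrt_sq (by linarith)]
        _ ≤ _ := Real.sqrt_le_sqrt (by nlinarith [sq_nonneg (hc.eigenvalues i)])
    linarith
  · rw [htr]
    simp only [pow_two]
    have hs : hA.sqrt * hA.sqrt = (y ^ 2 / 4) • (1 : Matrix (Fin d) (Fin d) ℝ) + c ^ 2 :=
      hA.sqrt_mul_self_aux
    simp only [Matrix.add_mul, Matrix.mul_add, Matrix.smul_mul, Matrix.mul_smul, smul_smul,
      Matrix.mul_one, Matrix.one_mul, hs]
    rw [show c * c = c ^ 2 from (pow_two c).symm]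
    module
end

section
/- Let $(U^n)_{n \ge 0}$ and $(V^n)_{n \ge 0}$ be sequences of nonnegative continuous adapted processes on $[0,T]$ vanishing at $t = 0$. Assume: (i) almost surely each $V^n$ is nondecreasing in $t$; (ii) the series $\sum_{n \ge 0} V^n_T$ converges almost surely; (iii) there is a constant $c \ge 0$ such that for every $n, k \in \mathbb{N}$ and $t \in [0,T]$, $\mathbb{E}[U^n_{t \wedge \theta_k}] \le c\,\mathbb{E}[V^n_{t \wedge \theta_k}]$, where $\theta_k = \inf\{s \in [0,T] : \sum_{n \ge 0} V^n_s \ge k\}$. Then for every $t \in [0,T]$, the series $\sum_{n \ge 0} U^n_t$ converges almost surely, and in particular $U^n_t \to 0$ almost surely. -/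
open MeasureTheory Set ENNReal

/-- Lemma 2.2 of Gobet–Landon: for sequences `(Uⁿ), (Vⁿ)` of nonnegative
continuous adapted processes vanishing at `0`, with each `Vⁿ` nondecreasing,
`∑ₙ Vⁿ_T < ∞` a.s., and a domination `E[Uⁿ_{t∧θ_k}] ≤ c E[Vⁿ_{t∧θ_k}]` at the
stopping times `θ_k = inf{s ∈ [0,T] : ∑ₙ Vⁿ_s ≥ k}` (`inf ∅ = +∞`, encoded by
adjoining `T`, which leaves `t ∧ θ_k` unchanged for `t ∈ [0,T]`), the series
`∑ₙ Uⁿ_t` converges a.s. for every `t ∈ [0,T]`. -/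
theorem as_convergence_series_from_domination_continuous_adapted
    {Ω : Type*} {m0 : MeasurableSpace Ω} (P : Measure Ω) [IsProbabilityMeasure P]
    (ℱ : Filtration ℝ m0) (T : ℝ) (hT : 0 < T)
    (U V : ℕ → ℝ → Ω → ℝ)
    (hUadapted : ∀ n, Adapted ℱ (fun t => U n t))
    (hVadapted : ∀ n, Adapted ℱ (fun t => V n t))
    (hUcont : ∀ n ω, ContinuousOn (fun t => U n t ω) (Icc 0 T))
    (hVcont : ∀ n ω, ContinuousOn (fun t => V n t ω) (Icc 0 T))
    (hUpos : ∀ n t ω, 0 ≤ U n t ω) (hVpos : ∀ n t ω, 0 ≤ V n t ω)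
    (hU0 : ∀ n ω, U n 0 ω = 0) (hV0 : ∀ n ω, V n 0 ω = 0)
    -- (i) each `Vⁿ` is nondecreasing in time, a.s.
    (hVmono : ∀ᵐ ω ∂P, ∀ n, MonotoneOn (fun t => V n t ω) (Icc 0 T))
    -- (ii) the series `∑ₙ Vⁿ_T` converges a.s.
    (hVsum : ∀ᵐ ω ∂P, Summable (fun n => V n T ω))
    -- (iii) domination at the localized times `t ∧ θ_k`
    (c : ℝ) (hc : 0 ≤ c)
    (hdom : ∀ n k : ℕ, ∀ t ∈ Icc (0 : ℝ) T,
      (∫⁻ ω, ENNReal.ofReal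
          (U n (min t (sInf ({s ∈ Icc (0 : ℝ) T | (k : ℝ) ≤ ∑' m, V m s ω} ∪ {T}))) ω) ∂P)
        ≤ ENNReal.ofReal c *
          ∫⁻ ω, ENNReal.ofReal
            (V n (min t (sInf ({s ∈ Icc (0 : ℝ) T | (k : ℝ) ≤ ∑' m, V m s ω} ∪ {T}))) ω) ∂P) :
    ∀ t ∈ Icc (0 : ℝ) T, ∀ᵐ ω ∂P, Summable (fun n => U n t ω) := by
  intro t ht
  classical
  set θ : ℕ → Ω → ℝ :=
    fun k ω => sInf ({s ∈ Icc (0 : ℝ) T | (k : ℝ) ≤ ∑' m, V m s ω} ∪ {T}) with hθdef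
  -- basic facts about θ
  have hne : ∀ k ω, ({s ∈ Icc (0 : ℝ) T | (k : ℝ) ≤ ∑' m, V m s ω} ∪ {T}).Nonempty :=
    fun k ω => ⟨T, Or.inr rfl⟩
  have hbdd : ∀ k ω, BddBelow ({s ∈ Icc (0 : ℝ) T | (k : ℝ) ≤ ∑' m, V m s ω} ∪ {T}) := by
    intro k ω
    refine ⟨0, ?_⟩
    rintro s (⟨⟨h0, _⟩, _⟩ | rfl)
    · exact h0
    · exact hT.le
  have hθT : ∀ k ω, θ k ω ≤ T := fun k ω => csInf_le (hbdd k ω) (Or.inr rfl)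
  have hθ0 : ∀ k ω, 0 ≤ θ k ω := by
    intro k ω
    refine le_csInf (hne k ω) ?_
    rintro s (⟨⟨h0, _⟩, _⟩ | rfl)
    · exact h0
    · exact hT.le
  have hmem : ∀ k ω, min t (θ k ω) ∈ Icc (0 : ℝ) T :=
    fun k ω => ⟨le_min ht.1 (hθ0 k ω), (min_le_left _ _).trans ht.2⟩
  -- Claim 1: a.s., for all k and all finite partial sums, ∑_{n ∈ F} V n (t ∧ θ k) ≤ k
  have claim1 : ∀ᵐ ω ∂P, ∀ (k : ℕ) (F : Finset ℕ),
      ∑ n ∈ F, V n (min t (θ k ω)) ω ≤ (k : ℝ) := by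
    filter_upwards [hVmono, hVsum] with ω hmono hsum k F
    have hsum_s : ∀ s ∈ Icc (0 : ℝ) T, Summable (fun m => V m s ω) := by
      intro s hs
      exact hsum.of_nonneg_of_le (fun m => hVpos m s ω)
        (fun m => hmono m hs ⟨hT.le, le_rfl⟩ hs.2)
    have hlt : ∀ s ∈ Icc (0 : ℝ) T, s < θ k ω → ∑ n ∈ F, V n s ω < (k : ℝ) := by
      intro s hs hslt
      have hnotmem : ¬ ((k : ℝ) ≤ ∑' m, V m s ω) := by
        intro h
        exact absurd (csInf_le (hbdd k ω) (Or.inl ⟨hs, h⟩)) (not_le.2 hslt)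
      have h1 : ∑ n ∈ F, V n s ω ≤ ∑' m, V m s ω :=
        Summable.sum_le_tsum F (fun m _ => hVpos m s ω) (hsum_s s hs)
      exact h1.trans_lt (not_le.1 hnotmem)
    by_cases hcase : min t (θ k ω) < θ k ω
    · exact (hlt _ (hmem k ω) hcase).le
    · have hs₀θ : min t (θ k ω) = θ k ω :=
        le_antisymm (min_le_right _ _) (not_lt.1 hcase)
      rw [hs₀θ]
      rcases eq_or_lt_of_le (hθ0 k ω) with hz | hpos
      · rw [← hz]
        simp only [hV0, Finset.sum_const_zero]
        exact Nat.cast_nonneg k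
      · have hcontF : ContinuousOn (fun s => ∑ n ∈ F, V n s ω) (Icc (0 : ℝ) T) :=
          continuousOn_finset_sum F (fun n _ => hVcont n ω)
        have hsub : Ico (0 : ℝ) (θ k ω) ⊆ Icc (0 : ℝ) T :=
          fun s hs => ⟨hs.1, hs.2.le.trans (hθT k ω)⟩
        have hcl : θ k ω ∈ closure (Ico (0 : ℝ) (θ k ω)) := by
          rw [closure_Ico hpos.ne]
          exact ⟨hθ0 k ω, le_rfl⟩
        haveI hnb : (nhdsWithin (θ k ω) (Ico (0 : ℝ) (θ k ω))).NeBot :=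
          mem_closure_iff_nhdsWithin_neBot.1 hcl
        have htend : Filter.Tendsto (fun s => ∑ n ∈ F, V n s ω)
            (nhdsWithin (θ k ω) (Ico (0 : ℝ) (θ k ω)))
            (nhds (∑ n ∈ F, V n (θ k ω) ω)) :=
          (hcontF _ ⟨hθ0 k ω, hθT k ω⟩).mono hsub
        refine le_of_tendsto htend ?_
        filter_upwards [self_mem_nhdsWithin] with s hs
        exact (hlt s (hsub hs) hs.2).le
  -- ENNReal version of Claim 1
  have claim1E : ∀ᵐ ω ∂P, ∀ (k : ℕ) (F : Finset ℕ),
      ∑ n ∈ F, ENNReal.ofReal (V n (min t (θ k ω)) ω) ≤ (k : ℝ≥0∞) := by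
    filter_upwards [claim1] with ω h k F
    rw [← ENNReal.ofReal_sum_of_nonneg (fun n _ => hVpos n _ ω), ← ENNReal.ofReal_natCast k]
    exact ENNReal.ofReal_le_ofReal (h k F)
  -- The events A k
  set A : ℕ → Set Ω := fun k => {ω | (∑' m, ENNReal.ofReal (V m T ω)) < (k : ℝ≥0∞)} with hAdef
  have hVTmeas : ∀ m, Measurable fun ω => ENNReal.ofReal (V m T ω) :=
    fun m => ENNReal.measurable_ofReal.comp
      ((hVadapted m T).mono (ℱ.le T) le_rfl)
  have hAmeas : ∀ k, MeasurableSet (A k) :=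
    fun k => measurableSet_lt (Measurable.ennreal_tsum hVTmeas) measurable_const
  -- On A k, the hitting set is empty, so t ∧ θ k = t
  have hAeq : ∀ᵐ ω ∂P, ∀ k, ω ∈ A k → min t (θ k ω) = t := by
    filter_upwards [hVmono, hVsum] with ω hmono hsum k hA
    have hsum_s : ∀ s ∈ Icc (0 : ℝ) T, Summable (fun m => V m s ω) := by
      intro s hs
      exact hsum.of_nonneg_of_le (fun m => hVpos m s ω)
        (fun m => hmono m hs ⟨hT.le, le_rfl⟩ hs.2)
    have hTlt : ∑' m, V m T ω < (k : ℝ) := by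
      have hA' : (∑' m, ENNReal.ofReal (V m T ω)) < (k : ℝ≥0∞) := hA
      rw [← ENNReal.ofReal_tsum_of_nonneg (fun m => hVpos m T ω) hsum,
        ← ENNReal.ofReal_natCast k] at hA'
      exact (ENNReal.ofReal_lt_ofReal_iff_of_nonneg
        (tsum_nonneg fun m => hVpos m T ω)).1 hA'
    have hempty : {s ∈ Icc (0 : ℝ) T | (k : ℝ) ≤ ∑' m, V m s ω} = ∅ := by
      ext s
      simp only [Set.mem_setOf_eq, Set.mem_empty_iff_false, iff_false, not_and]
      intro hs hks
      have hle : ∑' m, V m s ω ≤ ∑' m, V m T ω :=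
        Summable.tsum_le_tsum (fun m => hmono m hs ⟨hT.le, le_rfl⟩ hs.2) (hsum_s s hs) hsum
      linarith
    have : θ k ω = T := by
      rw [hθdef]
      simp only [hempty, Set.empty_union]
      exact csInf_singleton T
    rw [this]
    exact min_eq_left ht.2
  -- V-side integral bound
  have hVint : ∀ k : ℕ,
      (∑' n, ∫⁻ ω, ENNReal.ofReal (V n (min t (θ k ω)) ω) ∂P) ≤ (k : ℝ≥0∞) := by
    intro k
    rw [ENNReal.tsum_eq_iSup_sum]
    refine iSup_le fun F => ?_
    have hsuper : ∀ (F : Finset ℕ),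
        ∑ n ∈ F, ∫⁻ ω, ENNReal.ofReal (V n (min t (θ k ω)) ω) ∂P
          ≤ ∫⁻ ω, ∑ n ∈ F, ENNReal.ofReal (V n (min t (θ k ω)) ω) ∂P := by
      intro F
      induction F using Finset.induction_on with
      | empty => simp
      | @insert a s hnotmem ih =>
        rw [Finset.sum_insert hnotmem]
        calc _ ≤ (∫⁻ ω, ENNReal.ofReal (V a (min t (θ k ω)) ω) ∂P) +
              ∫⁻ ω, ∑ n ∈ s, ENNReal.ofReal (V n (min t (θ k ω)) ω) ∂P :=
            add_le_add le_rfl ih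
          _ ≤ _ := by
            refine (le_lintegral_add _ _).trans (le_of_eq ?_)
            refine lintegral_congr fun ω => ?_
            rw [Finset.sum_insert hnotmem]
    refine (hsuper F).trans ?_
    calc (∫⁻ ω, ∑ n ∈ F, ENNReal.ofReal (V n (min t (θ k ω)) ω) ∂P)
        ≤ ∫⁻ _, (k : ℝ≥0∞) ∂P :=
          lintegral_mono_ae (claim1E.mono fun ω h => h k F)
      _ = (k : ℝ≥0∞) := by simp
  -- U-side integral bound
  have hUint : ∀ k : ℕ,
      (∑' n, ∫⁻ ω, (A k).indicator (fun ω => ENNReal.ofReal (U n t ω)) ω ∂P)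
        ≤ ENNReal.ofReal c * (k : ℝ≥0∞) := by
    intro k
    have h1 : ∀ n, (∫⁻ ω, (A k).indicator (fun ω => ENNReal.ofReal (U n t ω)) ω ∂P)
        ≤ ∫⁻ ω, ENNReal.ofReal (U n (min t (θ k ω)) ω) ∂P := by
      intro n
      refine lintegral_mono_ae (hAeq.mono fun ω h => ?_)
      by_cases hω : ω ∈ A k
      · rw [Set.indicator_of_mem hω, h k hω]
      · rw [Set.indicator_of_notMem hω]
        exact zero_le
    calc (∑' n, ∫⁻ ω, (A k).indicator (fun ω => ENNReal.ofReal (U n t ω)) ω ∂P)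
        ≤ ∑' n, ENNReal.ofReal c *
            ∫⁻ ω, ENNReal.ofReal (V n (min t (θ k ω)) ω) ∂P :=
          ENNReal.tsum_le_tsum fun n => (h1 n).trans (hdom n k t ht)
      _ = ENNReal.ofReal c *
            ∑' n, ∫⁻ ω, ENNReal.ofReal (V n (min t (θ k ω)) ω) ∂P :=
          ENNReal.tsum_mul_left
      _ ≤ ENNReal.ofReal c * (k : ℝ≥0∞) := mul_le_mul_right (hVint k) _
  -- measurability of the indicator functions
  have hUmeas : ∀ n, Measurable fun ω => ENNReal.ofReal (U n t ω) :=
    fun n => ENNReal.measurable_ofReal.comp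
      ((hUadapted n t).mono (ℱ.le t) le_rfl)
  have hImeas : ∀ (k n : ℕ),
      Measurable ((A k).indicator (fun ω => ENNReal.ofReal (U n t ω))) :=
    fun k n => (hUmeas n).indicator (hAmeas k)
  -- a.e. finiteness of the sums on each A k
  have hfin : ∀ k : ℕ, ∀ᵐ ω ∂P,
      (∑' n, (A k).indicator (fun ω => ENNReal.ofReal (U n t ω)) ω) < ⊤ := by
    intro k
    refine ae_lt_top' (Measurable.ennreal_tsum fun n => hImeas k n).aemeasurable ?_
    rw [lintegral_tsum fun n => (hImeas k n).aemeasurable]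
    exact ((hUint k).trans_lt
      (ENNReal.mul_lt_top ENNReal.ofReal_lt_top (ENNReal.natCast_lt_top k))).ne
  -- conclusion
  filter_upwards [hVsum, MeasureTheory.ae_all_iff.2 hfin] with ω hsum hfin'
  have hne_top : (∑' m, ENNReal.ofReal (V m T ω)) ≠ ⊤ := by
    rw [← ENNReal.ofReal_tsum_of_nonneg (fun m => hVpos m T ω) hsum]
    exact ENNReal.ofReal_ne_top
  obtain ⟨k, hk⟩ := ENNReal.exists_nat_gt hne_top
  have hAk : ω ∈ A k := hk
  have hfink := hfin' k
  have heq : ∀ n, (A k).indicator (fun ω => ENNReal.ofReal (U n t ω)) ω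
      = ENNReal.ofReal (U n t ω) := fun n => Set.indicator_of_mem hAk _
  rw [tsum_congr heq] at hfink
  have hs := ENNReal.summable_toReal hfink.ne
  exact hs.congr fun n => by rw [ENNReal.toReal_ofReal (hUpos n t ω)]
end
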